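/- arXiv:2309.08370 — 3 statements merged into one kernel-verified Lean document; each statement's English description precedes it below -/
import Mathlib

section
/- For an integer t ≥ 5, if e1 and e2 are two non-adjacent edges of the complete graph K_t, then the number of copies of the path P_5 (path on 5 vertices) in K_t containing both e1 and e2 is exactly 12(t-4). -/
open SimpleGraph

set_option maxRecDepth 40000

/-- Positions `p q` are consecutive in the ordering `σ` (position-index: `σ i` is the
label at position `i`). -/
def PatAdj5 (σ : Equiv.Perm (Fin 5)) (p q : Fin 5) : Prop :=
  ∃ i : Fin 4, (p = σ i.castSucc ∧ q = σ i.succ) ∨ (p = σ i.succ ∧ q = σ i.castSucc)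

instance (σ : Equiv.Perm (Fin 5)) (p q : Fin 5) : Decidable (PatAdj5 σ p q) := by
  unfold PatAdj5; infer_instance

def Pcond5 (σ : Equiv.Perm (Fin 5)) : Prop :=
  PatAdj5 σ 0 1 ∧ PatAdj5 σ 2 3 ∧ σ⁻¹ 0 < σ⁻¹ 1

instance : DecidablePred Pcond5 := fun σ => by unfold Pcond5; infer_instance

lemma patadj5_ne (σ : Equiv.Perm (Fin 5)) (p q : Fin 5) (h : PatAdj5 σ p q) : p ≠ q := by
  obtain ⟨i, h | h⟩ := h <;> rw [h.1, h.2, ne_eq, σ.apply_eq_iff_eq]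
  · exact (Fin.castSucc_lt_succ (i := i)).ne
  · exact (Fin.castSucc_lt_succ (i := i)).ne'

lemma patadj5_symm (σ : Equiv.Perm (Fin 5)) (p q : Fin 5) (h : PatAdj5 σ p q) :
    PatAdj5 σ q p := by
  obtain ⟨i, h | h⟩ := h
  · exact ⟨i, Or.inr ⟨h.2, h.1⟩⟩
  · exact ⟨i, Or.inl ⟨h.2, h.1⟩⟩

lemma patadj5_rev (τ : Equiv.Perm (Fin 5)) (p q : Fin 5) :
    PatAdj5 (Fin.revPerm.trans τ) p q ↔ PatAdj5 τ p q := by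
  unfold PatAdj5
  constructor
  · rintro ⟨i, h⟩
    refine ⟨i.rev, ?_⟩
    simpa [Equiv.trans_apply, Fin.rev_castSucc, Fin.rev_succ, Fin.rev_rev] using h.symm
  · rintro ⟨i, h⟩
    refine ⟨i.rev, ?_⟩
    simpa [Equiv.trans_apply, Fin.rev_castSucc, Fin.rev_succ, Fin.rev_rev] using h.symm

lemma rev_orient5 (τ : Equiv.Perm (Fin 5)) (h : ¬ τ⁻¹ 0 < τ⁻¹ 1) :
    (Fin.revPerm.trans τ)⁻¹ 0 < (Fin.revPerm.trans τ)⁻¹ 1 := by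
  have hne : τ⁻¹ 1 ≠ τ⁻¹ 0 := fun hc => by
    have := τ⁻¹.injective hc; simp at this
  have h10 : τ⁻¹ 1 < τ⁻¹ 0 := lt_of_le_of_ne (not_lt.mp h) hne
  have e0 : (Fin.revPerm.trans τ)⁻¹ 0 = (τ⁻¹ 0).rev := rfl
  have e1 : (Fin.revPerm.trans τ)⁻¹ 1 = (τ⁻¹ 1).rev := rfl
  rw [e0, e1, Fin.rev_lt_rev]
  exact h10

lemma pg_iff5 : ∀ i j : Fin 5, ((i : ℕ) + 1 = (j : ℕ) ∨ (j : ℕ) + 1 = (i : ℕ)) ↔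
    ∃ k : Fin 4, (i = k.castSucc ∧ j = k.succ) ∨ (i = k.succ ∧ j = k.castSucc) := by decide

lemma patadj5_apply (σ : Equiv.Perm (Fin 5)) (i j : Fin 5) :
    PatAdj5 σ (σ i) (σ j) ↔ (pathGraph 5).Adj i j := by
  rw [pathGraph_adj, pg_iff5]
  unfold PatAdj5
  simp [σ.apply_eq_iff_eq]

lemma pcond5_card : Nat.card {σ : Equiv.Perm (Fin 5) // Pcond5 σ} = 12 := by
  rw [Nat.card_eq_fintype_card]
  decide

lemma pcond5_unique : ∀ σ σ' : Equiv.Perm (Fin 5), Pcond5 σ → Pcond5 σ' →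
    (∀ p q : Fin 5, PatAdj5 σ p q ↔ PatAdj5 σ' p q) → σ = σ' := by decide

/-- The path subgraph of `⊤` with vertices `w 0, …, w 4` visited in the order `σ`. -/
def pathSub5 {t : ℕ} (w : Fin 5 → Fin t) (hw : Function.Injective w)
    (σ : Equiv.Perm (Fin 5)) : (⊤ : SimpleGraph (Fin t)).Subgraph where
  verts := Set.range w
  Adj u u' := ∃ p q : Fin 5, PatAdj5 σ p q ∧ u = w p ∧ u' = w q
  adj_sub := by
    rintro u u' ⟨p, q, h, rfl, rfl⟩
    simpa using fun hc => patadj5_ne σ p q h (hw hc)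
  edge_vert := by rintro u u' ⟨p, q, h, rfl, rfl⟩; exact ⟨p, rfl⟩
  symm := by constructor; rintro u u' ⟨p, q, h, rfl, rfl⟩; exact ⟨q, p, patadj5_symm σ p q h, rfl, rfl⟩

lemma pathSub5_adj {t : ℕ} (w : Fin 5 → Fin t) (hw : Function.Injective w)
    (σ : Equiv.Perm (Fin 5)) (p q : Fin 5) :
    (pathSub5 w hw σ).Adj (w p) (w q) ↔ PatAdj5 σ p q := by
  constructor
  · rintro ⟨p', q', h, hp, hq⟩
    rwa [hw hp, hw hq]
  · intro h; exact ⟨p, q, h, rfl, rfl⟩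

noncomputable def pathSub5_iso {t : ℕ} (w : Fin 5 → Fin t) (hw : Function.Injective w)
    (σ : Equiv.Perm (Fin 5)) : (pathSub5 w hw σ).coe ≃g pathGraph 5 := by
  refine (RelIso.mk (σ.trans (Equiv.ofInjective w hw)) ?_).symm
  intro i j
  show (pathSub5 w hw σ).Adj (w (σ i)) (w (σ j)) ↔ _
  rw [pathSub5_adj, patadj5_apply]

lemma wfun_inj {t : ℕ} (a b c d x : Fin t) (hab : a ≠ b) (hac : a ≠ c) (had : a ≠ d)
    (hbc : b ≠ c) (hbd : b ≠ d) (hcd : c ≠ d) (hxa : x ≠ a) (hxb : x ≠ b) (hxc : x ≠ c)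
    (hxd : x ≠ d) : Function.Injective ![a,b,c,d,x] := by
  intro i j h
  fin_cases i <;> fin_cases j <;> simp_all

lemma key {t : ℕ} (ht : 5 ≤ t) (a b c d : Fin t) (hab : a ≠ b) (hcd : c ≠ d)
    (hac : a ≠ c) (had : a ≠ d) (hbc : b ≠ c) (hbd : b ≠ d) :
    Nat.card {H : (⊤ : SimpleGraph (Fin t)).Subgraph //
      Nonempty (H.coe ≃g pathGraph 5) ∧ s(a,b) ∈ H.edgeSet ∧ s(c,d) ∈ H.edgeSet}
      = 12 * (t - 4) := by
  set X := {x : Fin t // x ≠ a ∧ x ≠ b ∧ x ≠ c ∧ x ≠ d} with hX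
  set T := {H : (⊤ : SimpleGraph (Fin t)).Subgraph //
      Nonempty (H.coe ≃g pathGraph 5) ∧ s(a,b) ∈ H.edgeSet ∧ s(c,d) ∈ H.edgeSet} with hT
  have hwinj : ∀ x : X, Function.Injective ![a,b,c,d,x.1] := fun x =>
    wfun_inj a b c d x.1 hab hac had hbc hbd hcd x.2.1 x.2.2.1 x.2.2.2.1 x.2.2.2.2
  -- the map
  have hmem : ∀ (x : X) (σ : {σ : Equiv.Perm (Fin 5) // Pcond5 σ}),
      Nonempty ((pathSub5 ![a,b,c,d,x.1] (hwinj x) σ.1).coe ≃g pathGraph 5) ∧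
      s(a,b) ∈ (pathSub5 ![a,b,c,d,x.1] (hwinj x) σ.1).edgeSet ∧
      s(c,d) ∈ (pathSub5 ![a,b,c,d,x.1] (hwinj x) σ.1).edgeSet := by
    intro x σ
    refine ⟨⟨pathSub5_iso _ _ _⟩, ?_, ?_⟩
    · rw [Subgraph.mem_edgeSet]
      have := (pathSub5_adj ![a,b,c,d,x.1] (hwinj x) σ.1 0 1).mpr σ.2.1
      simpa using this
    · rw [Subgraph.mem_edgeSet]
      have := (pathSub5_adj ![a,b,c,d,x.1] (hwinj x) σ.1 2 3).mpr σ.2.2.1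
      simpa using this
  let Φ : X × {σ : Equiv.Perm (Fin 5) // Pcond5 σ} → T := fun p =>
    ⟨pathSub5 ![a,b,c,d,p.1.1] (hwinj p.1) p.2.1, hmem p.1 p.2⟩
  have hbij : Function.Bijective Φ := by
    constructor
    · rintro ⟨x, σ⟩ ⟨x', σ'⟩ h
      have hH : pathSub5 ![a,b,c,d,x.1] (hwinj x) σ.1
          = pathSub5 ![a,b,c,d,x'.1] (hwinj x') σ'.1 := congrArg Subtype.val h
      have hv : Set.range ![a,b,c,d,x.1] = Set.range ![a,b,c,d,x'.1] :=
        congrArg Subgraph.verts hH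
      have hxx : x = x' := by
        have hmemx : x'.1 ∈ Set.range ![a,b,c,d,x.1] := hv ▸ ⟨4, by simp⟩
        obtain ⟨i, hi⟩ := hmemx
        obtain ⟨hxa, hxb, hxc, hxd⟩ := x'.2
        fin_cases i <;> simp at hi
        · exact absurd hi.symm hxa
        · exact absurd hi.symm hxb
        · exact absurd hi.symm hxc
        · exact absurd hi.symm hxd
        · exact Subtype.ext hi
      subst hxx
      have hσ : σ = σ' := by
        apply Subtype.ext
        apply pcond5_unique σ.1 σ'.1 σ.2 σ'.2
        intro p q
        rw [← pathSub5_adj ![a,b,c,d,x.1] (hwinj x) σ.1 p q, hH,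
          pathSub5_adj ![a,b,c,d,x.1] (hwinj x) σ'.1 p q]
      rw [hσ]
    · rintro ⟨H, ⟨φ⟩, he1, he2⟩
      set g : Fin 5 → Fin t := fun i => ((φ.symm i : H.verts) : Fin t) with hgdef
      have hg : Function.Injective g := fun i j hij => by
        have := Subtype.ext hij
        exact φ.symm.injective this
      have hgmem : ∀ i, g i ∈ H.verts := fun i => (φ.symm i).2
      have hAdj : ∀ u u', H.Adj u u' ↔
          ∃ p q, (pathGraph 5).Adj p q ∧ u = g p ∧ u' = g q := by
        intro u u'
        constructor
        · intro h
          have hu : u ∈ H.verts := H.edge_vert h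
          have hu' : u' ∈ H.verts := H.edge_vert h.symm
          refine ⟨φ ⟨u, hu⟩, φ ⟨u', hu'⟩, ?_, by simp [hgdef], by simp [hgdef]⟩
          exact φ.map_rel_iff.mpr h
        · rintro ⟨p, q, hpq, rfl, rfl⟩
          exact φ.symm.map_rel_iff.mpr hpq
      have hadjab : H.Adj a b := Subgraph.mem_edgeSet.mp he1
      have hadjcd : H.Adj c d := Subgraph.mem_edgeSet.mp he2
      obtain ⟨pa, pb, hpab, ha, hb⟩ := hAdj a b |>.mp hadjab
      obtain ⟨pc, pd, hpcd, hc, hd⟩ := hAdj c d |>.mp hadjcd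
      have hgne : ∀ {p q : Fin 5}, g p ≠ g q → p ≠ q := fun h hc => h (by rw [hc])
      obtain ⟨px, hxa', hxb', hxc', hxd'⟩ :
          ∃ px : Fin 5, px ≠ pa ∧ px ≠ pb ∧ px ≠ pc ∧ px ≠ pd := by
        have h4 : ({pa,pb,pc,pd} : Finset (Fin 5)).card ≤ 4 := by
          have h1 := Finset.card_insert_le pa ({pb,pc,pd} : Finset (Fin 5))
          have h2 := Finset.card_insert_le pb ({pc,pd} : Finset (Fin 5))
          have h3 := Finset.card_insert_le pc ({pd} : Finset (Fin 5))
          simp at *; omega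
        have : (({pa,pb,pc,pd}ᶜ : Finset (Fin 5))).Nonempty := by
          rw [← Finset.card_pos, Finset.card_compl]
          simp only [Fintype.card_fin]; omega
        obtain ⟨px, hpx⟩ := this
        simp [Finset.mem_compl, not_or] at hpx
        exact ⟨px, hpx.1, hpx.2.1, hpx.2.2.1, hpx.2.2.2⟩
      set x : X := ⟨g px, by rw [ha]; exact hg.ne hxa', by rw [hb]; exact hg.ne hxb',
        by rw [hc]; exact hg.ne hxc', by rw [hd]; exact hg.ne hxd'⟩ with hxdef
      set w : Fin 5 → Fin t := ![a,b,c,d,x.1] with hwdef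
      have hw : Function.Injective w := hwinj x
      have hrange : Set.range w = Set.range g := by
        apply Set.eq_of_subset_of_ncard_le
        · rintro _ ⟨i, rfl⟩
          fin_cases i
          · exact ⟨pa, ha.symm⟩
          · exact ⟨pb, hb.symm⟩
          · exact ⟨pc, hc.symm⟩
          · exact ⟨pd, hd.symm⟩
          · exact ⟨px, rfl⟩
        · rw [← Set.image_univ, ← Set.image_univ, Set.ncard_image_of_injective _ hg,
            Set.ncard_image_of_injective _ hw]
        · exact Set.finite_range g
      have hex : ∀ i, ∃ j, w j = g i := fun i => by
        have : g i ∈ Set.range w := by rw [hrange]; exact ⟨i, rfl⟩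
        exact this
      choose τf hτf using hex
      have hτinj : Function.Injective τf := fun i j hij =>
        hg (by rw [← hτf, ← hτf, hij])
      let τ : Equiv.Perm (Fin 5) := Equiv.ofBijective τf (Finite.injective_iff_bijective.mp hτinj)
      have hτ : ∀ i, w (τ i) = g i := hτf
      have hHadjw : ∀ p q, H.Adj (w p) (w q) ↔ PatAdj5 τ p q := by
        intro p q
        rw [hAdj]
        constructor
        · rintro ⟨p', q', hpq, hp, hq⟩
          have hp' : p = τ p' := hw (by rw [hτ p']; exact hp ▸ rfl)
          have hq' : q = τ q' := hw (by rw [hτ q']; exact hq ▸ rfl)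
          rw [hp', hq']
          exact (patadj5_apply τ p' q').mpr hpq
        · intro hpat
          refine ⟨τ.symm p, τ.symm q, ?_, by rw [← hτ, Equiv.apply_symm_apply],
            by rw [← hτ, Equiv.apply_symm_apply]⟩
          apply (patadj5_apply τ _ _).mp
          simpa using hpat
      have hP1 : PatAdj5 τ 0 1 := by
        apply (hHadjw 0 1).mp
        have h0 : w 0 = a := by simp [hwdef]
        have h1 : w 1 = b := by simp [hwdef]
        rw [h0, h1]; exact hadjab
      have hP2 : PatAdj5 τ 2 3 := by
        apply (hHadjw 2 3).mp
        have h2 : w 2 = c := by simp [hwdef]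
        have h3 : w 3 = d := by simp [hwdef]
        rw [h2, h3]; exact hadjcd
      set σ : Equiv.Perm (Fin 5) := if τ⁻¹ 0 < τ⁻¹ 1 then τ else Fin.revPerm.trans τ with hσdef
      have hσadj : ∀ p q, PatAdj5 σ p q ↔ PatAdj5 τ p q := by
        intro p q
        rw [hσdef]
        split
        · rfl
        · exact patadj5_rev τ p q
      have hσcond : Pcond5 σ := by
        refine ⟨(hσadj 0 1).mpr hP1, (hσadj 2 3).mpr hP2, ?_⟩
        rw [hσdef]
        split
        · assumption
        · exact rev_orient5 τ (by assumption)
      refine ⟨⟨x, ⟨σ, hσcond⟩⟩, ?_⟩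
      apply Subtype.ext
      show pathSub5 w hw σ = H
      have hAdjIff : ∀ u u', (pathSub5 w hw σ).Adj u u' ↔ H.Adj u u' := by
        intro u u'
        constructor
        · rintro ⟨p, q, hpq, rfl, rfl⟩
          exact (hHadjw p q).mpr ((hσadj p q).mp hpq)
        · intro h
          have hu : u ∈ Set.range w := by
            rw [hrange]
            have hm := H.edge_vert h
            rw [show H.verts = Set.range g from ?_] at hm
            · exact hm
            · ext u0
              constructor
              · intro hu0; exact ⟨φ ⟨u0, hu0⟩, by simp [hgdef]⟩
              · rintro ⟨i, rfl⟩; exact hgmem i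
          have hu' : u' ∈ Set.range w := by
            rw [hrange]
            have hm := H.edge_vert h.symm
            rw [show H.verts = Set.range g from ?_] at hm
            · exact hm
            · ext u0
              constructor
              · intro hu0; exact ⟨φ ⟨u0, hu0⟩, by simp [hgdef]⟩
              · rintro ⟨i, rfl⟩; exact hgmem i
          obtain ⟨p, rfl⟩ := hu
          obtain ⟨q, rfl⟩ := hu'
          exact ⟨p, q, (hσadj p q).mpr ((hHadjw p q).mp h), rfl, rfl⟩
      ext u u'
      · show u ∈ Set.range w ↔ u ∈ H.verts
        rw [hrange]
        constructor
        · rintro ⟨i, rfl⟩; exact hgmem i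
        · intro hu0; exact ⟨φ ⟨u, hu0⟩, by simp [hgdef]⟩
      · exact hAdjIff u u'
  have hcount := Nat.card_eq_of_bijective Φ hbij
  rw [← hcount, Nat.card_prod, pcond5_card]
  have hXcard : Nat.card X = t - 4 := by
    rw [hX, Nat.card_eq_fintype_card, Fintype.card_subtype]
    have heq : (Finset.univ.filter fun x : Fin t => x ≠ a ∧ x ≠ b ∧ x ≠ c ∧ x ≠ d)
        = Finset.univ \ {a,b,c,d} := by
      ext u
      simp [not_or, and_assoc]
    rw [heq, Finset.card_sdiff_of_subset (Finset.subset_univ _), Finset.card_univ, Fintype.card_fin]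
    have h4 : ({a,b,c,d} : Finset (Fin t)).card = 4 := by
      rw [Finset.card_insert_of_notMem (by simp [hab, hac, had]),
        Finset.card_insert_of_notMem (by simp [hbc, hbd]),
        Finset.card_insert_of_notMem (by simp [hcd]), Finset.card_singleton]
    rw [h4]
  rw [hXcard, Nat.mul_comm]

theorem stmt_3 (t : ℕ) (ht : 5 ≤ t) (e1 e2 : Sym2 (Fin t))
    (he1 : e1 ∈ (⊤ : SimpleGraph (Fin t)).edgeSet)
    (he2 : e2 ∈ (⊤ : SimpleGraph (Fin t)).edgeSet)
    (hnadj : ∀ v : Fin t, ¬(v ∈ e1 ∧ v ∈ e2)) :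
    Nat.card {H : (⊤ : SimpleGraph (Fin t)).Subgraph //
      Nonempty (H.coe ≃g pathGraph 5) ∧ e1 ∈ H.edgeSet ∧ e2 ∈ H.edgeSet} = 12 * (t - 4) := by
  induction e1 using Sym2.ind with | _ a b =>
  induction e2 using Sym2.ind with | _ c d =>
  have hab : a ≠ b := by simpa using he1
  have hcd : c ≠ d := by simpa using he2
  have hac : a ≠ c := fun h => hnadj a ⟨by simp, by simp [h]⟩
  have had : a ≠ d := fun h => hnadj a ⟨by simp, by simp [h]⟩
  have hbc : b ≠ c := fun h => hnadj b ⟨by simp, by simp [h]⟩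
  have hbd : b ≠ d := fun h => hnadj b ⟨by simp, by simp [h]⟩
  exact key ht a b c d hab hcd hac had hbc hbd
end

section
/- For an integer t ≥ 5, if e1 and e2 are two distinct adjacent edges of the complete graph K_t, then the number of copies of the path P_5 in K_t containing both e1 and e2 is exactly 3(t-3)(t-4). -/
open SimpleGraph


namespace Stmt4Aux

variable {t : ℕ}

abbrev pAdj (i j : Fin 5) : Prop := i.val + 1 = j.val ∨ j.val + 1 = i.val

lemma pathGraph_adj' {i j : Fin 5} : (pathGraph 5).Adj i j ↔ pAdj i j := pathGraph_adj

def mkPath (g : Fin 5 → Fin t) (hg : Function.Injective g) :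
    (⊤ : SimpleGraph (Fin t)).Subgraph where
  verts := Set.range g
  Adj x y := ∃ i j : Fin 5, pAdj i j ∧ g i = x ∧ g j = y
  adj_sub := by
    rintro x y ⟨i, j, hij, rfl, rfl⟩
    simp only [top_adj, ne_eq]
    intro h
    have := hg h
    subst this
    omega
  edge_vert := by rintro x y ⟨i, j, hij, rfl, rfl⟩; exact Set.mem_range_self i
  symm := ⟨by rintro x y ⟨i, j, hij, rfl, rfl⟩; exact ⟨j, i, hij.symm, rfl, rfl⟩⟩

lemma mkPath_adj {g : Fin 5 → Fin t} {hg : Function.Injective g} {x y : Fin t} :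
    (mkPath g hg).Adj x y ↔ ∃ i j : Fin 5, pAdj i j ∧ g i = x ∧ g j = y := Iff.rfl

lemma mkPath_verts {g : Fin 5 → Fin t} {hg : Function.Injective g} :
    (mkPath g hg).verts = Set.range g := rfl

noncomputable def mkPathIso (g : Fin 5 → Fin t) (hg : Function.Injective g) :
    (mkPath g hg).coe ≃g pathGraph 5 where
  toEquiv := (Equiv.ofInjective g hg).symm
  map_rel_iff' := by
    have key : ∀ u : ↑(mkPath g hg).verts, g ((Equiv.ofInjective g hg).symm u) = ↑u :=
      fun u => Equiv.apply_ofInjective_symm hg u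
    intro u v
    simp only [Equiv.coe_fn_mk, Subgraph.coe_adj, mkPath_adj, pathGraph_adj']
    constructor
    · intro h
      exact ⟨(Equiv.ofInjective g hg).symm u, (Equiv.ofInjective g hg).symm v, h, key u, key v⟩
    · rintro ⟨i, j, hij, hi, hj⟩
      have hi' : (Equiv.ofInjective g hg).symm u = i := by apply hg; rw [key, hi]
      have hj' : (Equiv.ofInjective g hg).symm v = j := by apply hg; rw [key, hj]
      subst hi' hj'
      exact hij

end Stmt4Aux

namespace Stmt4Aux
variable {t : ℕ}

lemma mkPath_adj_apply {g : Fin 5 → Fin t} {hg : Function.Injective g} {i j : Fin 5} :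
    (mkPath g hg).Adj (g i) (g j) ↔ pAdj i j := by
  rw [mkPath_adj]
  constructor
  · rintro ⟨i', j', hij, hi, hj⟩
    rwa [hg hi, hg hj] at hij
  · intro h; exact ⟨i, j, h, rfl, rfl⟩

lemma exists_mkPath {H : (⊤ : SimpleGraph (Fin t)).Subgraph}
    (f : H.coe ≃g pathGraph 5) :
    ∃ (g : Fin 5 → Fin t) (hg : Function.Injective g), H = mkPath g hg := by
  set g : Fin 5 → Fin t := fun i => ((f.symm i : ↥H.verts) : Fin t) with hgdef
  have hg : Function.Injective g := by
    intro i j h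
    exact f.symm.injective (Subtype.ext h)
  refine ⟨g, hg, ?_⟩
  have hverts : H.verts = Set.range g := by
    ext x
    constructor
    · intro hx
      exact ⟨f ⟨x, hx⟩, by simp [hgdef]⟩
    · rintro ⟨i, rfl⟩
      exact (f.symm i).2
  refine Subgraph.ext hverts ?_
  ext x y
  rw [mkPath_adj]
  constructor
  · intro h
    have hx : x ∈ H.verts := H.edge_vert h
    have hy : y ∈ H.verts := H.edge_vert h.symm
    have hc : H.coe.Adj ⟨x, hx⟩ ⟨y, hy⟩ := h
    have hp : (pathGraph 5).Adj (f ⟨x, hx⟩) (f ⟨y, hy⟩) := f.map_rel_iff.mpr hc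
    exact ⟨f ⟨x, hx⟩, f ⟨y, hy⟩, pathGraph_adj.mp hp, by simp [hgdef], by simp [hgdef]⟩
  · rintro ⟨i, j, hij, rfl, rfl⟩
    have hp : (pathGraph 5).Adj (f (f.symm i)) (f (f.symm j)) := by
      simpa using pathGraph_adj.mpr hij
    have hc : H.coe.Adj (f.symm i) (f.symm j) := f.map_rel_iff.mp hp
    exact hc

lemma mkPath_congr {g g' : Fin 5 → Fin t} {hg : Function.Injective g}
    {hg' : Function.Injective g'} (h : g = g') : mkPath g hg = mkPath g' hg' := by
  subst h; rfl

lemma pAdj_rev {i j : Fin 5} : pAdj i.rev j.rev ↔ pAdj i j := by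
  revert i j; decide

lemma mkPath_rev (g : Fin 5 → Fin t) (hg : Function.Injective g) :
    mkPath (g ∘ Fin.rev) (hg.comp Fin.rev_injective) = mkPath g hg := by
  refine Subgraph.ext ?_ ?_
  · show Set.range (g ∘ Fin.rev) = Set.range g
    exact Fin.rev_surjective.range_comp g
  · ext x y
    rw [mkPath_adj, mkPath_adj]
    constructor
    · rintro ⟨i, j, hij, rfl, rfl⟩
      exact ⟨i.rev, j.rev, pAdj_rev.mpr hij, rfl, rfl⟩
    · rintro ⟨i, j, hij, rfl, rfl⟩
      exact ⟨i.rev, j.rev, pAdj_rev.mpr hij, by simp, by simp⟩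

end Stmt4Aux

namespace Stmt4Aux
variable {t : ℕ}

set_option maxHeartbeats 1000000 in
lemma rigid (σ : Fin 5 → Fin 5) (hinj : Function.Injective σ)
    (hadj : ∀ i j, pAdj (σ i) (σ j) ↔ pAdj i j) : σ = id ∨ σ = Fin.rev := by
  have hne : ∀ i j : Fin 5, i ≠ j → (σ i).val ≠ (σ j).val := fun i j h hv =>
    h (hinj (Fin.ext hv))
  have hlt : ∀ i : Fin 5, (σ i).val < 5 := fun i => (σ i).isLt
  have a01 := (hadj 0 1).mpr (by decide)
  have a12 := (hadj 1 2).mpr (by decide)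
  have a23 := (hadj 2 3).mpr (by decide)
  have a34 := (hadj 3 4).mpr (by decide)
  have d01 := hne 0 1 (by decide)
  have d02 := hne 0 2 (by decide)
  have d03 := hne 0 3 (by decide)
  have d04 := hne 0 4 (by decide)
  have d12 := hne 1 2 (by decide)
  have d13 := hne 1 3 (by decide)
  have d14 := hne 1 4 (by decide)
  have d23 := hne 2 3 (by decide)
  have d24 := hne 2 4 (by decide)
  have d34 := hne 3 4 (by decide)
  have l0 := hlt 0; have l1 := hlt 1; have l2 := hlt 2; have l3 := hlt 3; have l4 := hlt 4
  unfold pAdj at a01 a12 a23 a34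
  have suff : ((σ 0).val = 0 ∧ (σ 1).val = 1 ∧ (σ 2).val = 2 ∧ (σ 3).val = 3 ∧ (σ 4).val = 4)
    ∨ ((σ 0).val = 4 ∧ (σ 1).val = 3 ∧ (σ 2).val = 2 ∧ (σ 3).val = 1 ∧ (σ 4).val = 0) := by
    omega
  rcases suff with ⟨h0,h1,h2,h3,h4⟩|⟨h0,h1,h2,h3,h4⟩
  · left; funext i
    fin_cases i <;> apply Fin.ext <;> simp_all <;> rfl
  · right; funext i
    fin_cases i <;> apply Fin.ext <;> simp [Fin.rev] <;> omega


lemma eq_or_rev {g g' : Fin 5 → Fin t} {hg : Function.Injective g}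
    {hg' : Function.Injective g'} (h : mkPath g hg = mkPath g' hg') :
    g' = g ∨ g' = g ∘ Fin.rev := by
  have hverts : Set.range g = Set.range g' := by
    have := congrArg Subgraph.verts h
    rwa [mkPath_verts, mkPath_verts] at this
  have hmem : ∀ j, g' j ∈ Set.range g := by
    intro j; rw [hverts]; exact Set.mem_range_self j
  choose σ hσ using hmem
  have hσinj : Function.Injective σ := by
    intro i j hij
    apply hg'
    rw [← hσ, ← hσ, hij]
  have hadj : ∀ i j, pAdj (σ i) (σ j) ↔ pAdj i j := by
    intro i j
    have h1 : (mkPath g hg).Adj (g' i) (g' j) ↔ (mkPath g' hg').Adj (g' i) (g' j) := by rw [h]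
    rw [mkPath_adj_apply] at h1
    rw [← hσ i, ← hσ j, mkPath_adj_apply] at h1
    exact h1
  rcases rigid σ hσinj hadj with hid | hrev
  · left; funext j; rw [← hσ j, hid]; rfl
  · right; funext j; rw [← hσ j, hrev]; rfl

end Stmt4Aux

namespace Stmt4Aux
variable {t : ℕ}

def pat (a b c x y : Fin t) : Fin 3 → Fin 5 → Fin t :=
  ![![a,b,c,x,y], ![c,b,a,x,y], ![x,a,b,c,y]]

lemma pat_inj {a b c x y : Fin t} (hab : a ≠ b) (hbc : b ≠ c) (hac : a ≠ c)
    (hxa : x ≠ a) (hxb : x ≠ b) (hxc : x ≠ c)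
    (hya : y ≠ a) (hyb : y ≠ b) (hyc : y ≠ c) (hxy : x ≠ y) (k : Fin 3) :
    Function.Injective (pat a b c x y k) := by
  have hba := hab.symm; have hcb := hbc.symm; have hca := hac.symm
  have hax := hxa.symm; have hbx := hxb.symm; have hcx := hxc.symm
  have hay := hya.symm; have hby := hyb.symm; have hcy := hyc.symm
  have hyx := hxy.symm
  intro i j hij
  fin_cases k <;> fin_cases i <;> fin_cases j <;> simp_all [pat, Matrix.vecHead, Matrix.vecTail]

lemma rev5 {α : Type*} (p0 p1 p2 p3 p4 : α) :
    (![p0,p1,p2,p3,p4] : Fin 5 → α) ∘ Fin.rev = ![p4,p3,p2,p1,p0] := by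
  funext i; fin_cases i <;> rfl

lemma pat_rev {a b c x y : Fin t} (k : Fin 3) :
    pat a b c x y k ∘ Fin.rev = ![![y,x,c,b,a], ![y,x,a,b,c], ![y,c,b,a,x]] k := by
  fin_cases k <;> (funext i; fin_cases i <;> rfl)

set_option maxRecDepth 40000 in
lemma pat_eq {a b c x y x' y' : Fin t} (hab : a ≠ b) (hbc : b ≠ c) (hac : a ≠ c)
    (hxa : x ≠ a) (hxb : x ≠ b) (hxc : x ≠ c)
    (hya : y ≠ a) (hyb : y ≠ b) (hyc : y ≠ c) (hxy : x ≠ y)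
    (hxa' : x' ≠ a) (hxb' : x' ≠ b) (hxc' : x' ≠ c)
    (hya' : y' ≠ a) (hyb' : y' ≠ b) (hyc' : y' ≠ c) (hxy' : x' ≠ y')
    {k k' : Fin 3}
    (h : pat a b c x' y' k' = pat a b c x y k ∨
      pat a b c x' y' k' = pat a b c x y k ∘ Fin.rev) :
    k' = k ∧ x' = x ∧ y' = y := by
  have hba := hab.symm; have hcb := hbc.symm; have hca := hac.symm
  have hax := hxa.symm; have hbx := hxb.symm; have hcx := hxc.symm
  have hay := hya.symm; have hby := hyb.symm; have hcy := hyc.symm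
  rw [pat_rev] at h
  fin_cases k <;> fin_cases k' <;>
    rcases h with h | h <;>
    · have e0 := congrFun h 0
      have e1 := congrFun h 1
      have e2 := congrFun h 2
      have e3 := congrFun h 3
      have e4 := congrFun h 4
      clear h
      simp [pat, Matrix.vecHead, Matrix.vecTail, hab, hbc, hac, hba, hcb, hca,
        hxa, hxb, hxc, hya, hyb, hyc, hax, hbx, hcx, hay, hby, hcy, hxy] at e0 e1 e2 e3 e4
      all_goals first
        | exact ⟨rfl, e3, e4⟩
        | exact ⟨rfl, e0, e4⟩

lemma tri : ∀ i j l : Fin 5, pAdj i j → pAdj j l → i ≠ l →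
    (i=0∧j=1∧l=2)∨(i=2∧j=1∧l=0)∨(i=1∧j=2∧l=3)∨(i=3∧j=2∧l=1)∨(i=2∧j=3∧l=4)∨(i=4∧j=3∧l=2) := by
  decide

end Stmt4Aux

namespace Stmt4Aux
variable {t : ℕ}

lemma surj_aux {a b c : Fin t} {g : Fin 5 → Fin t} (hg : Function.Injective g) (hac : a ≠ c)
    (h1 : (mkPath g hg).Adj a b) (h2 : (mkPath g hg).Adj b c) :
    ∃ (k : Fin 3) (x y : Fin t),
      (x ≠ a ∧ x ≠ b ∧ x ≠ c) ∧ (y ≠ a ∧ y ≠ b ∧ y ≠ c) ∧ x ≠ y ∧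
      ∃ (hinj : Function.Injective (pat a b c x y k)),
        mkPath g hg = mkPath (pat a b c x y k) hinj := by
  obtain ⟨i, j, hij, hi, hj⟩ := h1
  obtain ⟨j', l, hjl, hj', hl⟩ := h2
  have hjj : j = j' := hg (hj.trans hj'.symm)
  subst hjj
  have hil : i ≠ l := fun h => hac (by rw [← hi, ← hl, h])
  rcases tri i j l hij hjl hil with ⟨ri,rj,rl⟩|⟨ri,rj,rl⟩|⟨ri,rj,rl⟩|⟨ri,rj,rl⟩|⟨ri,rj,rl⟩|⟨ri,rj,rl⟩ <;>
      subst ri rj rl <;> subst hi hj hl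
  · refine ⟨0, g 3, g 4,
      ⟨hg.ne (by decide), hg.ne (by decide), hg.ne (by decide)⟩,
      ⟨hg.ne (by decide), hg.ne (by decide), hg.ne (by decide)⟩,
      hg.ne (by decide), ?_, ?_⟩
    · have h : g = pat (g 0) (g 1) (g 2) (g 3) (g 4) 0 := by
        funext m; fin_cases m <;> rfl
      exact h ▸ hg
    · apply mkPath_congr
      funext m; fin_cases m <;> rfl
  · refine ⟨1, g 3, g 4,
      ⟨hg.ne (by decide), hg.ne (by decide), hg.ne (by decide)⟩,
      ⟨hg.ne (by decide), hg.ne (by decide), hg.ne (by decide)⟩,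
      hg.ne (by decide), ?_, ?_⟩
    · have h : g = pat (g 2) (g 1) (g 0) (g 3) (g 4) 1 := by
        funext m; fin_cases m <;> rfl
      exact h ▸ hg
    · apply mkPath_congr
      funext m; fin_cases m <;> rfl
  · refine ⟨2, g 0, g 4,
      ⟨hg.ne (by decide), hg.ne (by decide), hg.ne (by decide)⟩,
      ⟨hg.ne (by decide), hg.ne (by decide), hg.ne (by decide)⟩,
      hg.ne (by decide), ?_, ?_⟩
    · have h : g = pat (g 1) (g 2) (g 3) (g 0) (g 4) 2 := by
        funext m; fin_cases m <;> rfl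
      exact h ▸ hg
    · apply mkPath_congr
      funext m; fin_cases m <;> rfl
  · have hinj : Function.Injective (pat (g 3) (g 2) (g 1) (g 4) (g 0) 2) := by
      have hEq : pat (g 3) (g 2) (g 1) (g 4) (g 0) 2 = g ∘ Fin.rev := by
        funext m; fin_cases m <;> rfl
      rw [hEq]; exact hg.comp Fin.rev_injective
    refine ⟨2, g 4, g 0,
      ⟨hg.ne (by decide), hg.ne (by decide), hg.ne (by decide)⟩,
      ⟨hg.ne (by decide), hg.ne (by decide), hg.ne (by decide)⟩,
      hg.ne (by decide), hinj, ?_⟩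
    have hEq2 : g = pat (g 3) (g 2) (g 1) (g 4) (g 0) 2 ∘ Fin.rev := by
      funext m; fin_cases m <;> rfl
    exact (mkPath_congr hEq2).trans (mkPath_rev _ hinj)
  · have hinj : Function.Injective (pat (g 2) (g 3) (g 4) (g 1) (g 0) 1) := by
      have hEq : pat (g 2) (g 3) (g 4) (g 1) (g 0) 1 = g ∘ Fin.rev := by
        funext m; fin_cases m <;> rfl
      rw [hEq]; exact hg.comp Fin.rev_injective
    refine ⟨1, g 1, g 0,
      ⟨hg.ne (by decide), hg.ne (by decide), hg.ne (by decide)⟩,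
      ⟨hg.ne (by decide), hg.ne (by decide), hg.ne (by decide)⟩,
      hg.ne (by decide), hinj, ?_⟩
    have hEq2 : g = pat (g 2) (g 3) (g 4) (g 1) (g 0) 1 ∘ Fin.rev := by
      funext m; fin_cases m <;> rfl
    exact (mkPath_congr hEq2).trans (mkPath_rev _ hinj)
  · have hinj : Function.Injective (pat (g 4) (g 3) (g 2) (g 1) (g 0) 0) := by
      have hEq : pat (g 4) (g 3) (g 2) (g 1) (g 0) 0 = g ∘ Fin.rev := by
        funext m; fin_cases m <;> rfl
      rw [hEq]; exact hg.comp Fin.rev_injective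
    refine ⟨0, g 1, g 0,
      ⟨hg.ne (by decide), hg.ne (by decide), hg.ne (by decide)⟩,
      ⟨hg.ne (by decide), hg.ne (by decide), hg.ne (by decide)⟩,
      hg.ne (by decide), hinj, ?_⟩
    have hEq2 : g = pat (g 4) (g 3) (g 2) (g 1) (g 0) 0 ∘ Fin.rev := by
      funext m; fin_cases m <;> rfl
    exact (mkPath_congr hEq2).trans (mkPath_rev _ hinj)

end Stmt4Aux

namespace Stmt4Aux
variable {t : ℕ}

lemma pat_mem_ab {a b c x y : Fin t} (k : Fin 3)
    (hinj : Function.Injective (pat a b c x y k)) :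
    s(a,b) ∈ (mkPath (pat a b c x y k) hinj).edgeSet := by
  rw [Subgraph.mem_edgeSet]
  fin_cases k
  · exact ⟨0, 1, by decide, rfl, rfl⟩
  · exact ⟨2, 1, by decide, rfl, rfl⟩
  · exact ⟨1, 2, by decide, rfl, rfl⟩

lemma pat_mem_bc {a b c x y : Fin t} (k : Fin 3)
    (hinj : Function.Injective (pat a b c x y k)) :
    s(b,c) ∈ (mkPath (pat a b c x y k) hinj).edgeSet := by
  rw [Subgraph.mem_edgeSet]
  fin_cases k
  · exact ⟨1, 2, by decide, rfl, rfl⟩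
  · exact ⟨1, 0, by decide, rfl, rfl⟩
  · exact ⟨2, 3, by decide, rfl, rfl⟩

lemma arith (n : ℕ) : n * n - n = n * (n - 1) := by
  rw [Nat.mul_sub, mul_one]

lemma main (ht : 5 ≤ t) (a b c : Fin t) (hab : a ≠ b) (hbc : b ≠ c) (hac : a ≠ c) :
    Nat.card {H : (⊤ : SimpleGraph (Fin t)).Subgraph //
      Nonempty (H.coe ≃g pathGraph 5) ∧ s(a,b) ∈ H.edgeSet ∧ s(b,c) ∈ H.edgeSet} =
      3 * (t - 3) * (t - 4) := by
  classical
  set D := {p : Fin t × Fin t //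
    (p.1 ≠ a ∧ p.1 ≠ b ∧ p.1 ≠ c) ∧ (p.2 ≠ a ∧ p.2 ≠ b ∧ p.2 ≠ c) ∧ p.1 ≠ p.2} with hDdef
  let Φ : Fin 3 × D → {H : (⊤ : SimpleGraph (Fin t)).Subgraph //
      Nonempty (H.coe ≃g pathGraph 5) ∧ s(a,b) ∈ H.edgeSet ∧ s(b,c) ∈ H.edgeSet} :=
    fun p =>
      ⟨mkPath (pat a b c p.2.1.1 p.2.1.2 p.1)
          (pat_inj hab hbc hac p.2.2.1.1 p.2.2.1.2.1 p.2.2.1.2.2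
            p.2.2.2.1.1 p.2.2.2.1.2.1 p.2.2.2.1.2.2 p.2.2.2.2 p.1),
        ⟨mkPathIso _ _⟩, pat_mem_ab _ _, pat_mem_bc _ _⟩
  have hΦinj : Function.Injective Φ := by
    rintro ⟨k, ⟨⟨x, y⟩, hx, hy, hxy⟩⟩ ⟨k', ⟨⟨x', y'⟩, hx', hy', hxy'⟩⟩ h
    have hm := Subtype.ext_iff.mp h
    simp only [Φ] at hm
    have hor := eq_or_rev hm
    obtain ⟨hk, hxe, hye⟩ := pat_eq hab hbc hac hx.1 hx.2.1 hx.2.2 hy.1 hy.2.1 hy.2.2 hxy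
      hx'.1 hx'.2.1 hx'.2.2 hy'.1 hy'.2.1 hy'.2.2 hxy' hor
    subst hk; subst hxe; subst hye
    rfl
  have hΦsurj : Function.Surjective Φ := by
    rintro ⟨H, ⟨f⟩, h1, h2⟩
    obtain ⟨g, hg, rfl⟩ := exists_mkPath f
    rw [Subgraph.mem_edgeSet] at h1 h2
    obtain ⟨k, x, y, hx, hy, hxy, hinj, heq⟩ := surj_aux hg hac h1 h2
    exact ⟨⟨k, ⟨(x, y), hx, hy, hxy⟩⟩, Subtype.ext heq.symm⟩
  have hcard : Nat.card {H : (⊤ : SimpleGraph (Fin t)).Subgraph //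
      Nonempty (H.coe ≃g pathGraph 5) ∧ s(a,b) ∈ H.edgeSet ∧ s(b,c) ∈ H.edgeSet}
      = Nat.card (Fin 3 × D) :=
    (Nat.card_congr (Equiv.ofBijective Φ ⟨hΦinj, hΦsurj⟩)).symm
  rw [hcard, Nat.card_prod]
  have h3 : Nat.card (Fin 3) = 3 := by simp
  have hDcard : Nat.card D = (t - 3) * (t - 4) := by
    set A : Finset (Fin t) := Finset.univ \ {a, b, c} with hAdef
    have hiff : ∀ p : Fin t × Fin t,
        ((p.1 ≠ a ∧ p.1 ≠ b ∧ p.1 ≠ c) ∧ (p.2 ≠ a ∧ p.2 ≠ b ∧ p.2 ≠ c) ∧ p.1 ≠ p.2)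
        ↔ p ∈ A.offDiag := by
      intro p
      simp [hAdef, Finset.mem_offDiag, and_assoc]
    have hc := Nat.card_congr (Equiv.subtypeEquivRight hiff)
    rw [hDdef, hc, Nat.card_eq_finsetCard, Finset.offDiag_card]
    have hA : A.card = t - 3 := by
      rw [hAdef, Finset.card_sdiff_of_subset (Finset.subset_univ _), Finset.card_univ, Fintype.card_fin]
      have : ({a, b, c} : Finset (Fin t)).card = 3 := by
        rw [Finset.card_insert_of_notMem (by simp [hab, hac]),
          Finset.card_insert_of_notMem (by simp [hbc]), Finset.card_singleton]
      rw [this]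
    rw [hA, show t - 4 = t - 3 - 1 by omega]
    exact arith (t - 3)
  rw [h3, hDcard, mul_assoc]

end Stmt4Aux

theorem stmt_4 (t : ℕ) (ht : 5 ≤ t) (e1 e2 : Sym2 (Fin t))
    (he1 : e1 ∈ (⊤ : SimpleGraph (Fin t)).edgeSet)
    (he2 : e2 ∈ (⊤ : SimpleGraph (Fin t)).edgeSet)
    (hne : e1 ≠ e2) (hadj : ∃ v : Fin t, v ∈ e1 ∧ v ∈ e2) :
    Nat.card {H : (⊤ : SimpleGraph (Fin t)).Subgraph //
      Nonempty (H.coe ≃g pathGraph 5) ∧ e1 ∈ H.edgeSet ∧ e2 ∈ H.edgeSet} =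
      3 * (t - 3) * (t - 4) := by
  induction e1 using Sym2.ind with | _ u v =>
  induction e2 using Sym2.ind with | _ w z =>
  rw [SimpleGraph.mem_edgeSet, top_adj] at he1 he2
  obtain ⟨p, hp1, hp2⟩ := hadj
  rw [Sym2.mem_iff] at hp1 hp2
  rcases hp1 with rfl | rfl <;> rcases hp2 with rfl | rfl
  · rw [show s(p, v) = s(v, p) from Sym2.eq_swap]
    exact Stmt4Aux.main ht v p z (Ne.symm he1) he2
      (fun h => hne (by rw [h]))
  · rw [show s(p, v) = s(v, p) from Sym2.eq_swap,
      show s(w, p) = s(p, w) from Sym2.eq_swap]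
    exact Stmt4Aux.main ht v p w (Ne.symm he1) (Ne.symm he2)
      (fun h => hne (by rw [h]; exact Sym2.eq_swap))
  · exact Stmt4Aux.main ht u p z he1 he2
      (fun h => hne (by rw [h]; exact Sym2.eq_swap.symm ▸ rfl))
  · rw [show s(w, p) = s(p, w) from Sym2.eq_swap]
    exact Stmt4Aux.main ht u p w he1 (Ne.symm he2)
      (fun h => hne (by rw [h]))
end

section
/- For an integer t ≥ 3, if e1 and e2 are two non-adjacent edges of the complete bipartite graph K_{t,t}, then the number of copies of the path P_5 in K_{t,t} containing both e1 and e2 is exactly 6(t-2). -/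
open SimpleGraph

variable {V : Type*} {G : SimpleGraph V}

/-- The subgraph spanned by a 5-tuple of vertices, interpreted as a path. -/
def pSub (G : SimpleGraph V) (w : Fin 5 → V) : G.Subgraph where
  verts := Set.range w
  Adj u v := (∃ i j : Fin 5, (pathGraph 5).Adj i j ∧ w i = u ∧ w j = v) ∧ G.Adj u v
  adj_sub h := h.2
  edge_vert h := by obtain ⟨⟨i, j, _, hi, hj⟩, _⟩ := h; exact hi ▸ Set.mem_range_self i
  symm := ⟨fun u v h => by
    obtain ⟨⟨i, j, ha, hi, hj⟩, hG⟩ := h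
    exact ⟨⟨j, i, ha.symm, hj, hi⟩, hG.symm⟩⟩

/-- "Good" tuples: injective with consecutive vertices adjacent. -/
def GoodT (G : SimpleGraph V) (w : Fin 5 → V) : Prop :=
  Function.Injective w ∧ ∀ i j : Fin 5, (pathGraph 5).Adj i j → G.Adj (w i) (w j)

lemma pSub_adj (hw : GoodT G w) {u v : V} :
    (pSub G w).Adj u v ↔ ∃ i j : Fin 5, (pathGraph 5).Adj i j ∧ w i = u ∧ w j = v := by
  constructor
  · exact fun h => h.1
  · rintro ⟨i, j, ha, hi, hj⟩
    exact ⟨⟨i, j, ha, hi, hj⟩, hi ▸ hj ▸ hw.2 i j ha⟩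

lemma pSub_verts (w : Fin 5 → V) : (pSub G w).verts = Set.range w := rfl

/-- A good tuple's path subgraph is isomorphic to `pathGraph 5`. -/
noncomputable def pSubIso (hw : GoodT G w) : (pSub G w).coe ≃g pathGraph 5 where
  toEquiv := (Equiv.ofInjective w hw.1).symm
  map_rel_iff' := by
    rintro ⟨a, ha⟩ ⟨b, hb⟩
    obtain ⟨i, rfl⟩ := ha
    obtain ⟨j, rfl⟩ := hb
    have key : ∀ (i : Fin 5) (p : w i ∈ Set.range w),
        ((Equiv.ofInjective w hw.1).symm ⟨w i, p⟩ : Fin 5) = i := fun i p =>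
      Equiv.ofInjective_symm_apply hw.1 i
    show (pathGraph 5).Adj ((Equiv.ofInjective w hw.1).symm ⟨w i, Set.mem_range_self i⟩)
        ((Equiv.ofInjective w hw.1).symm ⟨w j, Set.mem_range_self j⟩) ↔ (pSub G w).Adj (w i) (w j)
    rw [key i, key j, pSub_adj hw]
    constructor
    · intro h; exact ⟨i, j, h, rfl, rfl⟩
    · rintro ⟨i', j', ha', hi', hj'⟩
      rwa [hw.1 hi', hw.1 hj'] at ha'

lemma pSub_adj_pair (hw : GoodT G w) {i j : Fin 5} :
    (pSub G w).Adj (w i) (w j) ↔ (pathGraph 5).Adj i j := by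
  rw [pSub_adj hw]
  constructor
  · rintro ⟨i', j', ha', hi', hj'⟩
    rwa [hw.1 hi', hw.1 hj'] at ha'
  · intro h; exact ⟨i, j, h, rfl, rfl⟩

lemma mem_pSub_edgeSet (hw : GoodT G w) {e : Sym2 V} :
    e ∈ (pSub G w).edgeSet ↔ ∃ i j : Fin 5, (pathGraph 5).Adj i j ∧ e = s(w i, w j) := by
  induction e with
  | _ u v =>
    rw [Subgraph.mem_edgeSet, pSub_adj hw]
    constructor
    · rintro ⟨i, j, ha, rfl, rfl⟩
      exact ⟨i, j, ha, rfl⟩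
    · rintro ⟨i, j, ha, he⟩
      rw [Sym2.eq_iff] at he
      rcases he with ⟨rfl, rfl⟩ | ⟨rfl, rfl⟩
      · exact ⟨i, j, ha, rfl, rfl⟩
      · exact ⟨j, i, ha.symm, rfl, rfl⟩

lemma pSub_classify {H : G.Subgraph} (f : H.coe ≃g pathGraph 5) :
    ∃ w : Fin 5 → V, GoodT G w ∧ H = pSub G w := by
  refine ⟨fun i => (f.symm i : V), ⟨?_, ?_⟩, ?_⟩
  · exact fun i j h => f.symm.toEquiv.injective (Subtype.ext h)
  · intro i j h
    exact H.adj_sub ((Subgraph.coe_adj _ _ _).mp (f.symm.map_adj_iff.mpr h))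
  · have hverts : H.verts = Set.range fun i => (f.symm i : V) := by
      ext v
      constructor
      · intro hv
        exact ⟨f ⟨v, hv⟩, congrArg Subtype.val (f.symm_apply_apply ⟨v, hv⟩)⟩
      · rintro ⟨i, rfl⟩
        exact (f.symm i).2
    refine Subgraph.ext hverts ?_
    funext u v
    apply propext
    constructor
    · intro h
      have hu : u ∈ H.verts := H.edge_vert h
      have hv : v ∈ H.verts := H.edge_vert h.symm
      have hadj : (pathGraph 5).Adj (f ⟨u, hu⟩) (f ⟨v, hv⟩) :=
        f.map_adj_iff.mpr ((Subgraph.coe_adj _ _ _).mpr h)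
      refine ⟨⟨f ⟨u, hu⟩, f ⟨v, hv⟩, hadj, ?_, ?_⟩, H.adj_sub h⟩
      · exact congrArg Subtype.val (f.symm_apply_apply ⟨u, hu⟩)
      · exact congrArg Subtype.val (f.symm_apply_apply ⟨v, hv⟩)
    · rintro ⟨⟨i, j, ha, rfl, rfl⟩, -⟩
      exact (Subgraph.coe_adj _ _ _).mp (f.symm.map_adj_iff.mpr ha)

lemma pg_rev {i j : Fin 5} :
    (pathGraph 5).Adj i.rev j.rev ↔ (pathGraph 5).Adj i j := by
  rw [pathGraph_adj, pathGraph_adj, Fin.val_rev, Fin.val_rev]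
  have := i.isLt; have := j.isLt
  omega

lemma pSub_rev (w : Fin 5 → V) : pSub G (w ∘ Fin.rev) = pSub G w := by
  refine Subgraph.ext (Fin.rev_surjective.range_comp w) ?_
  funext u v
  apply propext
  constructor
  · rintro ⟨⟨i, j, ha, hi, hj⟩, hG⟩
    exact ⟨⟨i.rev, j.rev, pg_rev.mpr ha, hi, hj⟩, hG⟩
  · rintro ⟨⟨i, j, ha, hi, hj⟩, hG⟩
    refine ⟨⟨i.rev, j.rev, pg_rev.mpr ha, ?_, ?_⟩, hG⟩
    · simpa [Fin.rev_rev] using hi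
    · simpa [Fin.rev_rev] using hj

lemma aut5 (σ : Fin 5 → Fin 5) (hinj : Function.Injective σ)
    (h : ∀ i j : Fin 5, (pathGraph 5).Adj (σ i) (σ j) ↔ (pathGraph 5).Adj i j) :
    (∀ i, σ i = i) ∨ (∀ i, σ i = i.rev) := by
  have h' : ∀ i j : Fin 5, (((σ i : ℕ) + 1 = (σ j : ℕ)) ∨ ((σ j : ℕ) + 1 = (σ i : ℕ))) ↔
      (((i : ℕ) + 1 = (j : ℕ)) ∨ ((j : ℕ) + 1 = (i : ℕ))) := by
    simpa [pathGraph_adj] using h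
  have hno : ∀ i j : Fin 5, ¬(((i : ℕ) + 1 = (j : ℕ)) ∨ ((j : ℕ) + 1 = (i : ℕ))) →
      ¬(((σ i : ℕ) + 1 = (σ j : ℕ)) ∨ ((σ j : ℕ) + 1 = (σ i : ℕ))) :=
    fun i j hn hh => hn ((h' i j).mp hh)
  have hne : ∀ i j : Fin 5, i ≠ j → (σ i : ℕ) ≠ (σ j : ℕ) :=
    fun i j hij e => hij (hinj (Fin.ext e))
  have key : ((σ 0 : ℕ) = 0 ∧ (σ 1 : ℕ) = 1 ∧ (σ 2 : ℕ) = 2 ∧ (σ 3 : ℕ) = 3 ∧ (σ 4 : ℕ) = 4) ∨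
      ((σ 0 : ℕ) = 4 ∧ (σ 1 : ℕ) = 3 ∧ (σ 2 : ℕ) = 2 ∧ (σ 3 : ℕ) = 1 ∧ (σ 4 : ℕ) = 0) := by
    have a01 := (h' 0 1).mpr (by decide); have a12 := (h' 1 2).mpr (by decide)
    have a23 := (h' 2 3).mpr (by decide); have a34 := (h' 3 4).mpr (by decide)
    have a02 := hno 0 2 (by decide); have a03 := hno 0 3 (by decide)
    have a04 := hno 0 4 (by decide); have a13 := hno 1 3 (by decide)
    have a14 := hno 1 4 (by decide); have a24 := hno 2 4 (by decide)
    have n01 := hne 0 1 (by decide); have n12 := hne 1 2 (by decide)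
    have n23 := hne 2 3 (by decide); have n34 := hne 3 4 (by decide)
    have b0 := (σ 0).isLt; have b1 := (σ 1).isLt; have b2 := (σ 2).isLt
    have b3 := (σ 3).isLt; have b4 := (σ 4).isLt
    rcases a01 with h1 | h1 <;> rcases a12 with h2 | h2 <;> rcases a23 with h3 | h3 <;>
      rcases a34 with h4 | h4 <;> omega
  rcases key with ⟨k0, k1, k2, k3, k4⟩ | ⟨k0, k1, k2, k3, k4⟩
  · left; intro i; fin_cases i <;> apply Fin.ext <;> simp_all
  · right; intro i; fin_cases i <;> apply Fin.ext <;> simp_all [Fin.val_rev] <;> decide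

lemma pSub_eq_cases (hw : GoodT G w) (hw' : GoodT G w') (h : pSub G w = pSub G w') :
    w' = w ∨ w' = w ∘ Fin.rev := by
  have hv : Set.range w = Set.range w' := congrArg Subgraph.verts h
  have hmem : ∀ i, w' i ∈ Set.range w := by rw [hv]; exact fun i => Set.mem_range_self i
  choose σ hσ using hmem
  have hσinj : Function.Injective σ := fun i j e => hw'.1 (by rw [← hσ i, ← hσ j, e])
  have hadj : ∀ i j : Fin 5, (pathGraph 5).Adj (σ i) (σ j) ↔ (pathGraph 5).Adj i j := by
    intro i j
    rw [← pSub_adj_pair hw (i := σ i) (j := σ j), hσ i, hσ j, h, pSub_adj_pair hw']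
  rcases aut5 σ hσinj hadj with h1 | h1
  · left; funext i; rw [← hσ i, h1 i]
  · right; funext i; rw [← hσ i, h1 i]; rfl

section Specific

open Sum

def pick3 {α : Type*} (f0 f1 f2 : α) : Fin 3 → α :=
  fun k => if k = 0 then f0 else if k = 1 then f1 else f2

@[simp] lemma pick3_0 {α} (f0 f1 f2 : α) : pick3 f0 f1 f2 0 = f0 := rfl
@[simp] lemma pick3_1 {α} (f0 f1 f2 : α) : pick3 f0 f1 f2 1 = f1 := rfl
@[simp] lemma pick3_2 {α} (f0 f1 f2 : α) : pick3 f0 f1 f2 2 = f2 := rfl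

variable {t : ℕ}

/-- Families of 5-tuples with the free vertex on the A-side. -/
def wA (a1 b1 a2 b2 : Fin t) : Fin 3 → Fin t → (Fin 5 → Fin t ⊕ Fin t) :=
  pick3 (fun x => ![inl a1, inr b1, inl x, inr b2, inl a2])
        (fun x => ![inl a1, inr b1, inl a2, inr b2, inl x])
        (fun x => ![inl x, inr b1, inl a1, inr b2, inl a2])

/-- Families of 5-tuples with the free vertex on the B-side. -/
def wB (a1 b1 a2 b2 : Fin t) : Fin 3 → Fin t → (Fin 5 → Fin t ⊕ Fin t) :=
  pick3 (fun y => ![inr b1, inl a1, inr y, inl a2, inr b2])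
        (fun y => ![inr b1, inl a1, inr b2, inl a2, inr y])
        (fun y => ![inr y, inl a1, inr b1, inl a2, inr b2])

variable {a1 b1 a2 b2 : Fin t}

lemma goodA (ha : a1 ≠ a2) (hb : b1 ≠ b2) (k : Fin 3) {x : Fin t}
    (hx : x ≠ a1 ∧ x ≠ a2) :
    GoodT (completeBipartiteGraph (Fin t) (Fin t)) (wA a1 b1 a2 b2 k x) := by
  obtain ⟨hx1, hx2⟩ := hx
  constructor
  · intro i j hij
    fin_cases k <;> fin_cases i <;> fin_cases j <;> simp_all [wA]
  · intro i j hij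
    rw [pathGraph_adj] at hij
    fin_cases k <;> fin_cases i <;> fin_cases j <;> simp_all [wA]

lemma goodB (ha : a1 ≠ a2) (hb : b1 ≠ b2) (k : Fin 3) {y : Fin t}
    (hy : y ≠ b1 ∧ y ≠ b2) :
    GoodT (completeBipartiteGraph (Fin t) (Fin t)) (wB a1 b1 a2 b2 k y) := by
  obtain ⟨hy1, hy2⟩ := hy
  constructor
  · intro i j hij
    fin_cases k <;> fin_cases i <;> fin_cases j <;> simp_all [wB]
  · intro i j hij
    rw [pathGraph_adj] at hij
    fin_cases k <;> fin_cases i <;> fin_cases j <;> simp_all [wB]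


lemma pgAdj : ∀ {i j : Fin 5}, (i : ℕ) + 1 = (j : ℕ) → (pathGraph 5).Adj i j :=
  fun h => pathGraph_adj.mpr (Or.inl h)

lemma memA_e1 (ha : a1 ≠ a2) (hb : b1 ≠ b2) (k : Fin 3) {x : Fin t}
    (hx : x ≠ a1 ∧ x ≠ a2) :
    s(inl a1, inr b1) ∈ (pSub (completeBipartiteGraph (Fin t) (Fin t))
      (wA a1 b1 a2 b2 k x)).edgeSet := by
  rw [mem_pSub_edgeSet (goodA ha hb k hx)]
  fin_cases k
  · exact ⟨0, 1, pgAdj rfl, by simp [wA]⟩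
  · exact ⟨0, 1, pgAdj rfl, by simp [wA]⟩
  · exact ⟨2, 1, (pgAdj rfl).symm, by simp [wA]⟩

lemma memA_e2 (ha : a1 ≠ a2) (hb : b1 ≠ b2) (k : Fin 3) {x : Fin t}
    (hx : x ≠ a1 ∧ x ≠ a2) :
    s(inl a2, inr b2) ∈ (pSub (completeBipartiteGraph (Fin t) (Fin t))
      (wA a1 b1 a2 b2 k x)).edgeSet := by
  rw [mem_pSub_edgeSet (goodA ha hb k hx)]
  fin_cases k
  · exact ⟨4, 3, (pgAdj rfl).symm, by simp [wA]⟩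
  · exact ⟨2, 3, pgAdj rfl, by simp [wA]⟩
  · exact ⟨4, 3, (pgAdj rfl).symm, by simp [wA]⟩

lemma memB_e1 (ha : a1 ≠ a2) (hb : b1 ≠ b2) (k : Fin 3) {y : Fin t}
    (hy : y ≠ b1 ∧ y ≠ b2) :
    s(inl a1, inr b1) ∈ (pSub (completeBipartiteGraph (Fin t) (Fin t))
      (wB a1 b1 a2 b2 k y)).edgeSet := by
  rw [mem_pSub_edgeSet (goodB ha hb k hy)]
  fin_cases k
  · exact ⟨1, 0, (pgAdj rfl).symm, by simp [wB, Sym2.eq_swap]⟩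
  · exact ⟨1, 0, (pgAdj rfl).symm, by simp [wB, Sym2.eq_swap]⟩
  · exact ⟨1, 2, pgAdj rfl, by simp [wB, Sym2.eq_swap]⟩

lemma memB_e2 (ha : a1 ≠ a2) (hb : b1 ≠ b2) (k : Fin 3) {y : Fin t}
    (hy : y ≠ b1 ∧ y ≠ b2) :
    s(inl a2, inr b2) ∈ (pSub (completeBipartiteGraph (Fin t) (Fin t))
      (wB a1 b1 a2 b2 k y)).edgeSet := by
  rw [mem_pSub_edgeSet (goodB ha hb k hy)]
  fin_cases k
  · exact ⟨3, 4, pgAdj rfl, by simp [wB, Sym2.eq_swap]⟩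
  · exact ⟨3, 2, (pgAdj rfl).symm, by simp [wB, Sym2.eq_swap]⟩
  · exact ⟨3, 4, pgAdj rfl, by simp [wB, Sym2.eq_swap]⟩


@[simp] lemma cons_last5 {α : Type*} (a b c d e : α) :
  ![a, b, c, d, e] (Fin.last 4) = e := rfl

@[simp] lemma last4_eq : Fin.last 4 = (4 : Fin 5) := by decide

@[simp] lemma rev5_0 : Fin.rev (0 : Fin 5) = 4 := by decide
@[simp] lemma rev5_1 : Fin.rev (1 : Fin 5) = 3 := by decide
@[simp] lemma rev5_2 : Fin.rev (2 : Fin 5) = 2 := by decide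
@[simp] lemma rev5_3 : Fin.rev (3 : Fin 5) = 1 := by decide
@[simp] lemma rev5_4 : Fin.rev (4 : Fin 5) = 0 := by decide

/-- Parameter space for the families. -/
def fam (a1 b1 a2 b2 : Fin t)
    (p : Fin 3 × ({x : Fin t // x ≠ a1 ∧ x ≠ a2} ⊕ {y : Fin t // y ≠ b1 ∧ y ≠ b2})) :
    (completeBipartiteGraph (Fin t) (Fin t)).Subgraph :=
  match p.2 with
  | .inl x => pSub _ (wA a1 b1 a2 b2 p.1 x.1)
  | .inr y => pSub _ (wB a1 b1 a2 b2 p.1 y.1)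

set_option maxRecDepth 8000 in
lemma fam_inj (ha : a1 ≠ a2) (hb : b1 ≠ b2) :
    Function.Injective (fam a1 b1 a2 b2) := by
  have ha' : a2 ≠ a1 := ha.symm
  have hb' : b2 ≠ b1 := hb.symm
  rintro ⟨k, xy⟩ ⟨k', xy'⟩ h
  rcases xy with ⟨x, hx⟩ | ⟨y, hy⟩ <;> rcases xy' with ⟨x', hx'⟩ | ⟨y', hy'⟩ <;>
    simp only [fam] at h
  · rcases pSub_eq_cases (goodA ha hb k hx) (goodA ha hb k' hx') h with hE | hE <;>
    · have h0 := congrFun hE 0; have h1 := congrFun hE 1; have h2 := congrFun hE 2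
      have h3 := congrFun hE 3; have h4 := congrFun hE 4
      clear h hE
      obtain ⟨hx1, hx2⟩ := hx; obtain ⟨hx1', hx2'⟩ := hx'
      have e1 := hx1.symm; have e2 := hx2.symm; have e3 := hx1'.symm; have e4 := hx2'.symm
      fin_cases k <;> fin_cases k' <;>
        (try simp [wA, wB, Function.comp_apply] at h0 h1 h2 h3 h4) <;>
        (try subst_vars) <;> simp_all [Prod.ext_iff, Subtype.ext_iff]
  · rcases pSub_eq_cases (goodA ha hb k hx) (goodB ha hb k' hy') h with hE | hE <;>
    · have h0 := congrFun hE 0; have h1 := congrFun hE 1; have h2 := congrFun hE 2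
      have h3 := congrFun hE 3; have h4 := congrFun hE 4
      clear h hE
      obtain ⟨hx1, hx2⟩ := hx; obtain ⟨hy1', hy2'⟩ := hy'
      have e1 := hx1.symm; have e2 := hx2.symm; have e3 := hy1'.symm; have e4 := hy2'.symm
      fin_cases k <;> fin_cases k' <;>
        (try simp [wA, wB, Function.comp_apply] at h0 h1 h2 h3 h4) <;>
        (try subst_vars) <;> simp_all [Prod.ext_iff, Subtype.ext_iff]
  · rcases pSub_eq_cases (goodB ha hb k hy) (goodA ha hb k' hx') h with hE | hE <;>
    · have h0 := congrFun hE 0; have h1 := congrFun hE 1; have h2 := congrFun hE 2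
      have h3 := congrFun hE 3; have h4 := congrFun hE 4
      clear h hE
      obtain ⟨hy1, hy2⟩ := hy; obtain ⟨hx1', hx2'⟩ := hx'
      have e1 := hy1.symm; have e2 := hy2.symm; have e3 := hx1'.symm; have e4 := hx2'.symm
      fin_cases k <;> fin_cases k' <;>
        (try simp [wA, wB, Function.comp_apply] at h0 h1 h2 h3 h4) <;>
        (try subst_vars) <;> simp_all [Prod.ext_iff, Subtype.ext_iff]
  · rcases pSub_eq_cases (goodB ha hb k hy) (goodB ha hb k' hy') h with hE | hE <;>
    · have h0 := congrFun hE 0; have h1 := congrFun hE 1; have h2 := congrFun hE 2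
      have h3 := congrFun hE 3; have h4 := congrFun hE 4
      clear h hE
      obtain ⟨hy1, hy2⟩ := hy; obtain ⟨hy1', hy2'⟩ := hy'
      have e1 := hy1.symm; have e2 := hy2.symm; have e3 := hy1'.symm; have e4 := hy2'.symm
      fin_cases k <;> fin_cases k' <;>
        (try simp [wA, wB, Function.comp_apply] at h0 h1 h2 h3 h4) <;>
        (try subst_vars) <;> simp_all [Prod.ext_iff, Subtype.ext_iff]


variable {w : Fin 5 → Fin t ⊕ Fin t} {c0 c1 c2 c3 c4 : Fin t}

lemma posL (hq0 : w 0 = inl c0) (hq1 : w 1 = inr c1) (hq2 : w 2 = inl c2)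
    (hq3 : w 3 = inr c3) (hq4 : w 4 = inl c4) {a b : Fin t} {i j : Fin 5}
    (hij : (i : ℕ) + 1 = (j : ℕ)) (hS : s(inl a, inr b) = s(w i, w j)) :
    (c0 = a ∧ c1 = b) ∨ (c2 = a ∧ c1 = b) ∨ (c2 = a ∧ c3 = b) ∨ (c4 = a ∧ c3 = b) := by
  rw [Sym2.eq_iff] at hS
  fin_cases i <;> fin_cases j <;>
    first
      | exact absurd hij (by decide)
      | (simp_all <;> tauto)

lemma posR (hq0 : w 0 = inr c0) (hq1 : w 1 = inl c1) (hq2 : w 2 = inr c2)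
    (hq3 : w 3 = inl c3) (hq4 : w 4 = inr c4) {a b : Fin t} {i j : Fin 5}
    (hij : (i : ℕ) + 1 = (j : ℕ)) (hS : s(inl a, inr b) = s(w i, w j)) :
    (c0 = b ∧ c1 = a) ∨ (c2 = b ∧ c1 = a) ∨ (c2 = b ∧ c3 = a) ∨ (c4 = b ∧ c3 = a) := by
  rw [Sym2.eq_iff] at hS
  fin_cases i <;> fin_cases j <;>
    first
      | exact absurd hij (by decide)
      | (simp_all <;> tauto)

lemma adj_inl {u : Fin t ⊕ Fin t} {c : Fin t}
    (h : (completeBipartiteGraph (Fin t) (Fin t)).Adj (inl c) u) : ∃ y, u = inr y := by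
  cases u with
  | inl d => simp at h
  | inr d => exact ⟨d, rfl⟩

lemma adj_inr {u : Fin t ⊕ Fin t} {c : Fin t}
    (h : (completeBipartiteGraph (Fin t) (Fin t)).Adj (inr c) u) : ∃ x, u = inl x := by
  cases u with
  | inl d => exact ⟨d, rfl⟩
  | inr d => simp at h

lemma fam_surj (ha : a1 ≠ a2) (hb : b1 ≠ b2)
    {H : (completeBipartiteGraph (Fin t) (Fin t)).Subgraph}
    (hiso : Nonempty (H.coe ≃g pathGraph 5))
    (h1 : s(inl a1, inr b1) ∈ H.edgeSet) (h2 : s(inl a2, inr b2) ∈ H.edgeSet) :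
    ∃ p, fam a1 b1 a2 b2 p = H := by
  obtain ⟨f⟩ := hiso
  obtain ⟨w, hg, rfl⟩ := pSub_classify f
  have hgne : ∀ m m' : Fin 5, m ≠ m' → w m ≠ w m' := fun m m' hmm e => hmm (hg.1 e)
  rw [mem_pSub_edgeSet hg] at h1 h2
  have h1' : ∃ i j : Fin 5, (i : ℕ) + 1 = (j : ℕ) ∧ s(inl a1, inr b1) = s(w i, w j) := by
    obtain ⟨i, j, hij, hS⟩ := h1
    rcases pathGraph_adj.mp hij with hc | hc
    · exact ⟨i, j, hc, hS⟩
    · exact ⟨j, i, hc, hS.trans Sym2.eq_swap⟩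
  have h2' : ∃ i j : Fin 5, (i : ℕ) + 1 = (j : ℕ) ∧ s(inl a2, inr b2) = s(w i, w j) := by
    obtain ⟨i, j, hij, hS⟩ := h2
    rcases pathGraph_adj.mp hij with hc | hc
    · exact ⟨i, j, hc, hS⟩
    · exact ⟨j, i, hc, hS.trans Sym2.eq_swap⟩
  clear h1 h2
  obtain ⟨i1, j1, hij1, hS1⟩ := h1'
  obtain ⟨i2, j2, hij2, hS2⟩ := h2'
  rcases hq0 : w 0 with c0 | c0
  case inl =>
    obtain ⟨c1, hq1⟩ := adj_inl (by rw [← hq0]; exact hg.2 0 1 (pgAdj (by decide)))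
    obtain ⟨c2, hq2⟩ := adj_inr (by rw [← hq1]; exact hg.2 1 2 (pgAdj (by decide)))
    obtain ⟨c3, hq3⟩ := adj_inl (by rw [← hq2]; exact hg.2 2 3 (pgAdj (by decide)))
    obtain ⟨c4, hq4⟩ := adj_inr (by rw [← hq3]; exact hg.2 3 4 (pgAdj (by decide)))
    have hP1 := posL hq0 hq1 hq2 hq3 hq4 hij1 hS1
    have hP2 := posL hq0 hq1 hq2 hq3 hq4 hij2 hS2
    rcases hP1 with ⟨q1, q2⟩ | ⟨q1, q2⟩ | ⟨q1, q2⟩ | ⟨q1, q2⟩ <;>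
      rcases hP2 with ⟨r1, r2⟩ | ⟨r1, r2⟩ | ⟨r1, r2⟩ | ⟨r1, r2⟩
    · exact absurd (q1.symm.trans r1) ha
    · exact absurd (q2.symm.trans r2) hb
    · have n1 : c4 ≠ a1 := fun e => hgne 4 0 (by decide) (by rw [hq4, hq0, e, q1])
      have n2 : c4 ≠ a2 := fun e => hgne 4 2 (by decide) (by rw [hq4, hq2, e, r1])
      refine ⟨⟨1, Sum.inl ⟨c4, n1, n2⟩⟩, ?_⟩
      show pSub _ (wA a1 b1 a2 b2 1 c4) = pSub _ w
      refine congrArg _ ?_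
      funext m; fin_cases m <;> simp [wA, hq0, hq1, hq2, hq3, hq4, q1, q2, r1, r2]
    · have n1 : c2 ≠ a1 := fun e => hgne 2 0 (by decide) (by rw [hq2, hq0, e, q1])
      have n2 : c2 ≠ a2 := fun e => hgne 2 4 (by decide) (by rw [hq2, hq4, e, r1])
      refine ⟨⟨0, Sum.inl ⟨c2, n1, n2⟩⟩, ?_⟩
      show pSub _ (wA a1 b1 a2 b2 0 c2) = pSub _ w
      refine congrArg _ ?_
      funext m; fin_cases m <;> simp [wA, hq0, hq1, hq2, hq3, hq4, q1, q2, r1, r2]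
    · exact absurd (q2.symm.trans r2) hb
    · exact absurd (q1.symm.trans r1) ha
    · exact absurd (q1.symm.trans r1) ha
    · have n1 : c0 ≠ a1 := fun e => hgne 0 2 (by decide) (by rw [hq0, hq2, e, q1])
      have n2 : c0 ≠ a2 := fun e => hgne 0 4 (by decide) (by rw [hq0, hq4, e, r1])
      refine ⟨⟨2, Sum.inl ⟨c0, n1, n2⟩⟩, ?_⟩
      show pSub _ (wA a1 b1 a2 b2 2 c0) = pSub _ w
      refine congrArg _ ?_
      funext m; fin_cases m <;> simp [wA, hq0, hq1, hq2, hq3, hq4, q1, q2, r1, r2]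
    · have n1 : c4 ≠ a1 := fun e => hgne 4 2 (by decide) (by rw [hq4, hq2, e, q1])
      have n2 : c4 ≠ a2 := fun e => hgne 4 0 (by decide) (by rw [hq4, hq0, e, r1])
      refine ⟨⟨2, Sum.inl ⟨c4, n1, n2⟩⟩, ?_⟩
      show pSub _ (wA a1 b1 a2 b2 2 c4) = pSub _ w
      have hTup : wA a1 b1 a2 b2 2 c4 = w ∘ Fin.rev := by
        funext m; fin_cases m <;> simp [wA, hq0, hq1, hq2, hq3, hq4, q1, q2, r1, r2]
      rw [hTup, pSub_rev]
    · exact absurd (q1.symm.trans r1) ha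
    · exact absurd (q1.symm.trans r1) ha
    · exact absurd (q2.symm.trans r2) hb
    · have n1 : c2 ≠ a1 := fun e => hgne 2 4 (by decide) (by rw [hq2, hq4, e, q1])
      have n2 : c2 ≠ a2 := fun e => hgne 2 0 (by decide) (by rw [hq2, hq0, e, r1])
      refine ⟨⟨0, Sum.inl ⟨c2, n1, n2⟩⟩, ?_⟩
      show pSub _ (wA a1 b1 a2 b2 0 c2) = pSub _ w
      have hTup : wA a1 b1 a2 b2 0 c2 = w ∘ Fin.rev := by
        funext m; fin_cases m <;> simp [wA, hq0, hq1, hq2, hq3, hq4, q1, q2, r1, r2]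
      rw [hTup, pSub_rev]
    · have n1 : c0 ≠ a1 := fun e => hgne 0 4 (by decide) (by rw [hq0, hq4, e, q1])
      have n2 : c0 ≠ a2 := fun e => hgne 0 2 (by decide) (by rw [hq0, hq2, e, r1])
      refine ⟨⟨1, Sum.inl ⟨c0, n1, n2⟩⟩, ?_⟩
      show pSub _ (wA a1 b1 a2 b2 1 c0) = pSub _ w
      have hTup : wA a1 b1 a2 b2 1 c0 = w ∘ Fin.rev := by
        funext m; fin_cases m <;> simp [wA, hq0, hq1, hq2, hq3, hq4, q1, q2, r1, r2]
      rw [hTup, pSub_rev]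
    · exact absurd (q2.symm.trans r2) hb
    · exact absurd (q1.symm.trans r1) ha
  case inr =>
    obtain ⟨c1, hq1⟩ := adj_inr (by rw [← hq0]; exact hg.2 0 1 (pgAdj (by decide)))
    obtain ⟨c2, hq2⟩ := adj_inl (by rw [← hq1]; exact hg.2 1 2 (pgAdj (by decide)))
    obtain ⟨c3, hq3⟩ := adj_inr (by rw [← hq2]; exact hg.2 2 3 (pgAdj (by decide)))
    obtain ⟨c4, hq4⟩ := adj_inl (by rw [← hq3]; exact hg.2 3 4 (pgAdj (by decide)))
    have hP1 := posR hq0 hq1 hq2 hq3 hq4 hij1 hS1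
    have hP2 := posR hq0 hq1 hq2 hq3 hq4 hij2 hS2
    rcases hP1 with ⟨q1, q2⟩ | ⟨q1, q2⟩ | ⟨q1, q2⟩ | ⟨q1, q2⟩ <;>
      rcases hP2 with ⟨r1, r2⟩ | ⟨r1, r2⟩ | ⟨r1, r2⟩ | ⟨r1, r2⟩
    · exact absurd (q1.symm.trans r1) hb
    · exact absurd (q2.symm.trans r2) ha
    · have n1 : c4 ≠ b1 := fun e => hgne 4 0 (by decide) (by rw [hq4, hq0, e, q1])
      have n2 : c4 ≠ b2 := fun e => hgne 4 2 (by decide) (by rw [hq4, hq2, e, r1])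
      refine ⟨⟨1, Sum.inr ⟨c4, n1, n2⟩⟩, ?_⟩
      show pSub _ (wB a1 b1 a2 b2 1 c4) = pSub _ w
      refine congrArg _ ?_
      funext m; fin_cases m <;> simp [wB, hq0, hq1, hq2, hq3, hq4, q1, q2, r1, r2]
    · have n1 : c2 ≠ b1 := fun e => hgne 2 0 (by decide) (by rw [hq2, hq0, e, q1])
      have n2 : c2 ≠ b2 := fun e => hgne 2 4 (by decide) (by rw [hq2, hq4, e, r1])
      refine ⟨⟨0, Sum.inr ⟨c2, n1, n2⟩⟩, ?_⟩
      show pSub _ (wB a1 b1 a2 b2 0 c2) = pSub _ w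
      refine congrArg _ ?_
      funext m; fin_cases m <;> simp [wB, hq0, hq1, hq2, hq3, hq4, q1, q2, r1, r2]
    · exact absurd (q2.symm.trans r2) ha
    · exact absurd (q1.symm.trans r1) hb
    · exact absurd (q1.symm.trans r1) hb
    · have n1 : c0 ≠ b1 := fun e => hgne 0 2 (by decide) (by rw [hq0, hq2, e, q1])
      have n2 : c0 ≠ b2 := fun e => hgne 0 4 (by decide) (by rw [hq0, hq4, e, r1])
      refine ⟨⟨2, Sum.inr ⟨c0, n1, n2⟩⟩, ?_⟩
      show pSub _ (wB a1 b1 a2 b2 2 c0) = pSub _ w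
      refine congrArg _ ?_
      funext m; fin_cases m <;> simp [wB, hq0, hq1, hq2, hq3, hq4, q1, q2, r1, r2]
    · have n1 : c4 ≠ b1 := fun e => hgne 4 2 (by decide) (by rw [hq4, hq2, e, q1])
      have n2 : c4 ≠ b2 := fun e => hgne 4 0 (by decide) (by rw [hq4, hq0, e, r1])
      refine ⟨⟨2, Sum.inr ⟨c4, n1, n2⟩⟩, ?_⟩
      show pSub _ (wB a1 b1 a2 b2 2 c4) = pSub _ w
      have hTup : wB a1 b1 a2 b2 2 c4 = w ∘ Fin.rev := by
        funext m; fin_cases m <;> simp [wB, hq0, hq1, hq2, hq3, hq4, q1, q2, r1, r2]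
      rw [hTup, pSub_rev]
    · exact absurd (q1.symm.trans r1) hb
    · exact absurd (q1.symm.trans r1) hb
    · exact absurd (q2.symm.trans r2) ha
    · have n1 : c2 ≠ b1 := fun e => hgne 2 4 (by decide) (by rw [hq2, hq4, e, q1])
      have n2 : c2 ≠ b2 := fun e => hgne 2 0 (by decide) (by rw [hq2, hq0, e, r1])
      refine ⟨⟨0, Sum.inr ⟨c2, n1, n2⟩⟩, ?_⟩
      show pSub _ (wB a1 b1 a2 b2 0 c2) = pSub _ w
      have hTup : wB a1 b1 a2 b2 0 c2 = w ∘ Fin.rev := by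
        funext m; fin_cases m <;> simp [wB, hq0, hq1, hq2, hq3, hq4, q1, q2, r1, r2]
      rw [hTup, pSub_rev]
    · have n1 : c0 ≠ b1 := fun e => hgne 0 4 (by decide) (by rw [hq0, hq4, e, q1])
      have n2 : c0 ≠ b2 := fun e => hgne 0 2 (by decide) (by rw [hq0, hq2, e, r1])
      refine ⟨⟨1, Sum.inr ⟨c0, n1, n2⟩⟩, ?_⟩
      show pSub _ (wB a1 b1 a2 b2 1 c0) = pSub _ w
      have hTup : wB a1 b1 a2 b2 1 c0 = w ∘ Fin.rev := by
        funext m; fin_cases m <;> simp [wB, hq0, hq1, hq2, hq3, hq4, q1, q2, r1, r2]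
      rw [hTup, pSub_rev]
    · exact absurd (q2.symm.trans r2) ha
    · exact absurd (q1.symm.trans r1) hb

lemma edge_extract {e : Sym2 (Fin t ⊕ Fin t)}
    (he : e ∈ (completeBipartiteGraph (Fin t) (Fin t)).edgeSet) :
    ∃ a b : Fin t, e = s(inl a, inr b) := by
  induction e with
  | _ u v =>
    rw [SimpleGraph.mem_edgeSet] at he
    rcases u with a | b <;> rcases v with a' | b'
    · simp at he
    · exact ⟨a, b', rfl⟩
    · exact ⟨a', b, Sym2.eq_swap⟩
    · simp at he

lemma card_ne2 (u v : Fin t) (huv : u ≠ v) :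
    Nat.card {x : Fin t // x ≠ u ∧ x ≠ v} = t - 2 := by
  rw [Nat.card_eq_fintype_card, Fintype.card_subtype]
  have h : (Finset.univ.filter fun x : Fin t => x ≠ u ∧ x ≠ v) = Finset.univ \ {u, v} := by
    ext x
    simp [not_or]
  rw [h, Finset.card_sdiff_of_subset (Finset.subset_univ _), Finset.card_univ, Fintype.card_fin,
    Finset.card_insert_of_notMem (by simpa using huv), Finset.card_singleton]

end Specific

theorem stmt_9 (t : ℕ) (ht : 3 ≤ t) (e1 e2 : Sym2 (Fin t ⊕ Fin t))
    (he1 : e1 ∈ (completeBipartiteGraph (Fin t) (Fin t)).edgeSet)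
    (he2 : e2 ∈ (completeBipartiteGraph (Fin t) (Fin t)).edgeSet)
    (hnadj : ∀ v : Fin t ⊕ Fin t, ¬(v ∈ e1 ∧ v ∈ e2)) :
    Nat.card {H : (completeBipartiteGraph (Fin t) (Fin t)).Subgraph //
      Nonempty (H.coe ≃g pathGraph 5) ∧ e1 ∈ H.edgeSet ∧ e2 ∈ H.edgeSet} = 6 * (t - 2) := by
  obtain ⟨a1, b1, rfl⟩ := edge_extract he1
  obtain ⟨a2, b2, rfl⟩ := edge_extract he2
  have ha : a1 ≠ a2 := fun e => hnadj (Sum.inl a1) ⟨by simp, by simp [e]⟩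
  have hb : b1 ≠ b2 := fun e => hnadj (Sum.inr b1) ⟨by simp, by simp [e]⟩
  have hF : ∀ p : Fin 3 × ({x : Fin t // x ≠ a1 ∧ x ≠ a2} ⊕ {y : Fin t // y ≠ b1 ∧ y ≠ b2}),
      Nonempty ((fam a1 b1 a2 b2 p).coe ≃g pathGraph 5) ∧
        s(Sum.inl a1, Sum.inr b1) ∈ (fam a1 b1 a2 b2 p).edgeSet ∧
        s(Sum.inl a2, Sum.inr b2) ∈ (fam a1 b1 a2 b2 p).edgeSet := by
    rintro ⟨k, ⟨x, hx⟩ | ⟨y, hy⟩⟩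
    · exact ⟨⟨pSubIso (goodA ha hb k hx)⟩, memA_e1 ha hb k hx, memA_e2 ha hb k hx⟩
    · exact ⟨⟨pSubIso (goodB ha hb k hy)⟩, memB_e1 ha hb k hy, memB_e2 ha hb k hy⟩
  have key : Nat.card {H : (completeBipartiteGraph (Fin t) (Fin t)).Subgraph //
      Nonempty (H.coe ≃g pathGraph 5) ∧ s(Sum.inl a1, Sum.inr b1) ∈ H.edgeSet ∧
        s(Sum.inl a2, Sum.inr b2) ∈ H.edgeSet} =
      Nat.card (Fin 3 × ({x : Fin t // x ≠ a1 ∧ x ≠ a2} ⊕ {y : Fin t // y ≠ b1 ∧ y ≠ b2})) := by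
    refine (Nat.card_congr (Equiv.ofBijective (fun p => ⟨fam a1 b1 a2 b2 p, hF p⟩) ⟨?_, ?_⟩)).symm
    · intro p q h
      exact fam_inj ha hb (congrArg Subtype.val h)
    · rintro ⟨H, hiso, h1, h2⟩
      obtain ⟨p, hp⟩ := fam_surj ha hb hiso h1 h2
      exact ⟨p, Subtype.ext hp⟩
  rw [key, Nat.card_prod, Nat.card_sum, card_ne2 a1 a2 ha, card_ne2 b1 b2 hb,
    Nat.card_eq_fintype_card, Fintype.card_fin]
  omega
end
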